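/- arXiv:2410.21084 — 2 statements merged into one kernel-verified Lean document; each statement's English description precedes it below -/
import Mathlib

section
/- Let n ≥ 3 and let S_n be the star graph on vertices {0,1,...,n−1} with center 0. Then the monoid of partial endomorphisms of S_n has cardinality |PEnd(S_n)| = (n+1)^{n−1} + n^{n−1} + (n−1)·2^{n−1}. -/
variable {V : Type*}

/-- Partial transformations of `V`. -/
abbrev PTrans (V : Type*) := V → Option V

/-- Monoid of partial transformations under (left-to-right) composition. -/
instance : Monoid (PTrans V) where
  mul f g := fun v => (f v).bind g
  one := fun v => some v
  mul_assoc f g h := by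
    funext v
    show ((f v).bind g).bind h = (f v).bind (fun x => (g x).bind h)
    cases f v <;> simp
  one_mul f := by funext v; rfl
  mul_one f := by
    funext v
    show (f v).bind (fun x => some x) = f v
    cases f v <;> simp

/-- Domain of a partial transformation. -/
def pdom (α : PTrans V) : Set V := {u | α u ≠ none}

/-- Image of a partial transformation. -/
def pim (α : PTrans V) : Set V := {v | ∃ u, α u = some v}

def IsPEnd (G : SimpleGraph V) (α : PTrans V) : Prop :=
  ∀ u v u' v', α u = some u' → α v = some v' → G.Adj u v → G.Adj u' v'

def IsPwEnd (G : SimpleGraph V) (α : PTrans V) : Prop :=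
  ∀ u v u' v', α u = some u' → α v = some v' → G.Adj u v → u' ≠ v' → G.Adj u' v'

def IsPsEnd (G : SimpleGraph V) (α : PTrans V) : Prop :=
  ∀ u v u' v', α u = some u' → α v = some v' → (G.Adj u v ↔ G.Adj u' v')

def IsPswEnd (G : SimpleGraph V) (α : PTrans V) : Prop :=
  ∀ u v u' v', α u = some u' → α v = some v' → ((G.Adj u v ∧ u' ≠ v') ↔ G.Adj u' v')

/-- Injectivity of a partial transformation. -/
def PInjective (α : PTrans V) : Prop :=
  ∀ u v w, α u = some w → α v = some w → u = v

open Classical in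
/-- The inverse of a partial (injective) transformation. -/
noncomputable def pinv (α : PTrans V) : PTrans V :=
  fun v => if h : ∃ u, α u = some v then some h.choose else none

/-- Partial automorphism: injective, and both it and its inverse are
partial endomorphisms. -/
def IsPAut (G : SimpleGraph V) (α : PTrans V) : Prop :=
  PInjective α ∧ IsPEnd G α ∧ IsPEnd G (pinv α)

/-- The star graph on vertices `{0,1,...,n-1}` with center `0`. -/
def starGraph (n : ℕ) : SimpleGraph (Fin n) :=
  SimpleGraph.fromRel (fun u _ => (u : ℕ) = 0)

lemma star_adj {n : ℕ} [NeZero n] {u v : Fin n} :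
    (starGraph n).Adj u v ↔ u ≠ v ∧ (u = 0 ∨ v = 0) := by
  simp only [starGraph, SimpleGraph.fromRel_adj, Fin.val_eq_zero_iff]

def Ok (n : ℕ) (a b : Option (Fin n)) : Prop :=
  ∀ a' b', a = some a' → b = some b' → (starGraph n).Adj a' b'

lemma isPEnd_iff {n : ℕ} [NeZero n] (α : PTrans (Fin n)) :
    IsPEnd (starGraph n) α ↔ ∀ i : {j : Fin n // j ≠ 0}, Ok n (α 0) (α (i : Fin n)) := by
  constructor
  · intro h i a b ha hb
    exact h 0 i a b ha hb (star_adj.2 ⟨fun e => i.2 e.symm, Or.inl rfl⟩)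
  · intro h u v u' v' hu hv hadj
    rcases (star_adj.1 hadj) with ⟨hne, h0 | h0⟩
    · subst h0
      exact h ⟨v, fun e => hne e.symm⟩ u' v' hu hv
    · subst h0
      exact ((star_adj (n := n)).2 ⟨(star_adj.1 (h ⟨u, fun e => hne e⟩ v' u' hv hu)).1.symm,
        (star_adj.1 (h ⟨u, fun e => hne e⟩ v' u' hv hu)).2.symm⟩)

noncomputable def okEquiv {n : ℕ} (a' : Fin n) :
    {b : Option (Fin n) // Ok n (some a') b} ≃ Option {x : Fin n // (starGraph n).Adj a' x} where
  toFun b := match b with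
    | ⟨none, _⟩ => none
    | ⟨some x, h⟩ => some ⟨x, h a' x rfl rfl⟩
  invFun o := match o with
    | none => ⟨none, fun _ _ _ hb => by cases hb⟩
    | some ⟨x, hx⟩ => ⟨some x, fun a'' b' ha hb => by
        cases ha; cases hb; exact hx⟩
  left_inv := by rintro ⟨_ | x, h⟩ <;> rfl
  right_inv := by rintro (_ | ⟨x, hx⟩) <;> rfl

lemma card_ne_zero {n : ℕ} [NeZero n] : Nat.card {j : Fin n // j ≠ 0} = n - 1 := by
  rw [Nat.card_eq_fintype_card]
  have : Fintype.card {j : Fin n // ¬ (j = 0)} = n - 1 := by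
    rw [Fintype.card_subtype_compl, Fintype.card_subtype_eq, Fintype.card_fin]
  exact this

lemma card_ok_none {n : ℕ} : Nat.card {b : Option (Fin n) // Ok n none b} = n + 1 := by
  rw [Nat.card_congr (Equiv.subtypeUnivEquiv (p := Ok n none) (fun b a' b' ha _ => by cases ha))]
  simp [Nat.card_eq_fintype_card]

lemma card_ok_zero {n : ℕ} [NeZero n] :
    Nat.card {b : Option (Fin n) // Ok n (some 0) b} = n := by
  rw [Nat.card_congr (okEquiv 0)]
  letI : Fintype {x : Fin n // (starGraph n).Adj 0 x} := Fintype.ofFinite _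
  rw [Nat.card_eq_fintype_card, Fintype.card_option]
  have e : {x : Fin n // (starGraph n).Adj 0 x} ≃ {x : Fin n // ¬ (x = 0)} :=
    Equiv.subtypeEquivRight (fun x => by
      rw [star_adj]
      constructor
      · rintro ⟨h1, _⟩ rfl; exact h1 rfl
      · intro h; exact ⟨fun e => h e.symm, Or.inl rfl⟩)
  rw [Fintype.card_congr e, Fintype.card_subtype_compl, Fintype.card_subtype_eq,
    Fintype.card_fin]
  have := Nat.pos_of_ne_zero (NeZero.ne n)
  omega

lemma card_ok_leaf {n : ℕ} [NeZero n] {a' : Fin n} (ha : a' ≠ 0) :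
    Nat.card {b : Option (Fin n) // Ok n (some a') b} = 2 := by
  rw [Nat.card_congr (okEquiv a')]
  letI : Fintype {x : Fin n // (starGraph n).Adj a' x} := Fintype.ofFinite _
  rw [Nat.card_eq_fintype_card, Fintype.card_option]
  have e : {x : Fin n // (starGraph n).Adj a' x} ≃ {x : Fin n // x = 0} :=
    Equiv.subtypeEquivRight (fun x => by
      rw [star_adj]
      constructor
      · rintro ⟨h1, h2 | h2⟩
        · exact absurd h2 ha
        · exact h2
      · rintro rfl; exact ⟨ha, Or.inr rfl⟩)
  rw [Fintype.card_congr e, Fintype.card_subtype_eq]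

theorem stmt6 (n : ℕ) (hn : 3 ≤ n) :
    Nat.card {α : PTrans (Fin n) // IsPEnd (starGraph n) α} =
      (n + 1) ^ (n - 1) + n ^ (n - 1) + (n - 1) * 2 ^ (n - 1) := by
  haveI : NeZero n := ⟨by omega⟩
  -- main equivalence
  have e1 : {α : PTrans (Fin n) // IsPEnd (starGraph n) α} ≃
      Σ a : Option (Fin n), ({j : Fin n // j ≠ 0} → {b : Option (Fin n) // Ok n a b}) := by
    refine ((Equiv.funSplitAt 0 (Option (Fin n))).subtypeEquiv (fun α => ?_)).trans
      (((Equiv.subtypeProdEquivSigmaSubtype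
        (fun (a : Option (Fin n)) (f : {j : Fin n // j ≠ 0} → Option (Fin n)) =>
          ∀ i, Ok n a (f i))).trans
        (Equiv.sigmaCongrRight (fun a => Equiv.subtypePiEquivPi))))
    exact isPEnd_iff α
  rw [Nat.card_congr e1]
  letI : ∀ a : Option (Fin n),
      Fintype ({j : Fin n // j ≠ 0} → {b : Option (Fin n) // Ok n a b}) :=
    fun a => Fintype.ofFinite _
  rw [Nat.card_eq_fintype_card, Fintype.card_sigma]
  have key : ∀ a : Option (Fin n),
      Fintype.card ({j : Fin n // j ≠ 0} → {b : Option (Fin n) // Ok n a b}) =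
        (Nat.card {b : Option (Fin n) // Ok n a b}) ^ (n - 1) := by
    intro a
    rw [← Nat.card_eq_fintype_card, Nat.card_fun, card_ne_zero]
  simp only [key]
  rw [Fintype.sum_option, card_ok_none]
  have hsum : ∑ x : Fin n, Nat.card {b : Option (Fin n) // Ok n (some x) b} ^ (n - 1) =
      (n - 1) * 2 ^ (n - 1) + n ^ (n - 1) := by
    rw [Finset.sum_eq_sum_sdiff_singleton_add (Finset.mem_univ (0 : Fin n))]
    rw [card_ok_zero]
    congr 1
    rw [Finset.sum_congr rfl (fun x hx => by
      rw [card_ok_leaf (by simpa using (Finset.mem_sdiff.1 hx).2)])]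
    rw [Finset.sum_const, Finset.card_sdiff_of_subset (by simp), Finset.card_univ, Fintype.card_fin,
      Finset.card_singleton, smul_eq_mul]
  rw [hsum]
  ring
end

section
/- Let n ≥ 3 and let S_n be the star graph on vertices {0,1,...,n−1} with center 0. Then the cardinality of the monoid of injective partial endomorphisms is |IEnd(S_n)| = 3 + 3n² − 4n + ∑_{k=2}^{n−1} (C(n,k) + C(n−1,k))·C(n−1,k)·k!. -/
variable {V : Type*}

open Finset

section Aux
variable {A B : Type*} [Fintype A] [Fintype B] [DecidableEq A] [DecidableEq B]

abbrev PInjFun (A B : Type*) : Type _ :=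
  {f : A → Option B // ∀ u v w, f u = some w → f v = some w → u = v}

def sigmaToPInj (x : Σ s : Finset A, ({a // a ∈ s} ↪ B)) : PInjFun A B :=
  ⟨fun a => if h : a ∈ x.1 then some (x.2 ⟨a, h⟩) else none, by
    intro u v w hu hv
    by_cases h1 : u ∈ x.1 <;> by_cases h2 : v ∈ x.1 <;> simp [h1, h2] at hu hv
    have := x.2.injective (hu.trans hv.symm)
    exact congrArg Subtype.val this⟩

set_option linter.unusedSectionVars false in
theorem sigmaToPInj_bijective : Function.Bijective (sigmaToPInj (A := A) (B := B)) := by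
  constructor
  · rintro ⟨s, e⟩ ⟨t, f⟩ h
    have hval := congrArg Subtype.val h
    have hst : s = t := by
      ext a
      have := congrFun hval a
      by_cases h1 : a ∈ s <;> by_cases h2 : a ∈ t <;>
        simp [sigmaToPInj, h1, h2] at this ⊢
    subst hst
    have : e = f := by
      ext ⟨a, ha⟩
      have := congrFun hval a
      simp [sigmaToPInj, ha] at this
      exact this
    rw [this]
  · rintro ⟨f, hf⟩
    refine ⟨⟨univ.filter (fun a => (f a).isSome),
      ⟨fun a => (f a.1).get ((Finset.mem_filter.mp a.2).2), ?_⟩⟩, ?_⟩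
    · rintro ⟨a, ha⟩ ⟨b, hb⟩ h
      simp only [mem_filter, mem_univ, true_and] at ha hb
      have h' : (f a).get ha = (f b).get hb := h
      apply Subtype.ext
      refine hf a b ((f a).get ha) (Option.some_get ha).symm ?_
      rw [h']
      exact (Option.some_get hb).symm
    · apply Subtype.ext
      funext a
      by_cases h : (f a).isSome
      · simp [sigmaToPInj, h]
        exact Option.some_get _
      · simp only [sigmaToPInj, mem_filter, mem_univ, true_and, h, dite_false]
        simp only [Option.not_isSome_iff_eq_none] at h
        exact h.symm

theorem card_pinjFun : Nat.card (PInjFun A B) =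
    ∑ k ∈ range (Fintype.card A + 1),
      (Fintype.card A).choose k * (Fintype.card B).descFactorial k := by
  classical
  rw [Nat.card_congr (Equiv.ofBijective _ (sigmaToPInj_bijective (A := A) (B := B))).symm]
  rw [Nat.card_eq_fintype_card, Fintype.card_sigma]
  have h : ∀ s : Finset A, Fintype.card ({a // a ∈ s} ↪ B)
      = (Fintype.card B).descFactorial s.card := by
    intro s; rw [Fintype.card_embedding_eq, Fintype.card_coe]
  simp_rw [h]
  rw [← Finset.powerset_univ,
    Finset.sum_powerset_apply_card (fun k => (Fintype.card B).descFactorial k)]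
  simp [Finset.card_univ, Nat.smul_one_eq_cast]

end Aux

section Star
variable (n : ℕ) [NeZero n]

theorem starAdj (u v : Fin n) :
    (starGraph n).Adj u v ↔ u ≠ v ∧ (u = 0 ∨ v = 0) := by
  have h : ∀ w : Fin n, (w : ℕ) = 0 ↔ w = 0 := by
    intro w
    rw [Fin.ext_iff, Fin.val_zero]
  simp [starGraph, SimpleGraph.fromRel_adj, h]

abbrev SLeaf := {i : Fin n // i ≠ 0}

def gA (f : PInjFun (SLeaf n) (Fin n)) : PTrans (Fin n) :=
  fun v => if h : v = 0 then none else f.1 ⟨v, h⟩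

def gB (f : PInjFun (SLeaf n) (SLeaf n)) : PTrans (Fin n) :=
  fun v => if h : v = 0 then some 0 else (f.1 ⟨v, h⟩).map Subtype.val

def gC (c : SLeaf n) (o : Option (SLeaf n)) : PTrans (Fin n) :=
  fun v => if v = 0 then some c.1 else if o.map Subtype.val = some v then some 0 else none

theorem gA_mem (f : PInjFun (SLeaf n) (Fin n)) :
    PInjective (gA n f) ∧ IsPEnd (starGraph n) (gA n f) := by
  constructor
  · intro u v w hu hv
    simp only [gA] at hu hv
    by_cases h1 : u = 0
    · rw [dif_pos h1] at hu; exact absurd hu (by simp)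
    · by_cases h2 : v = 0
      · rw [dif_pos h2] at hv; exact absurd hv (by simp)
      · rw [dif_neg h1] at hu; rw [dif_neg h2] at hv
        exact congrArg Subtype.val (f.2 ⟨u, h1⟩ ⟨v, h2⟩ w hu hv)
  · intro u v u' v' hu hv hadj
    simp only [gA] at hu hv
    obtain ⟨hne, h0 | h0⟩ := (starAdj n u v).mp hadj <;> subst h0
    · rw [dif_pos rfl] at hu; exact absurd hu (by simp)
    · rw [dif_pos rfl] at hv; exact absurd hv (by simp)

theorem gB_mem (f : PInjFun (SLeaf n) (SLeaf n)) :
    PInjective (gB n f) ∧ IsPEnd (starGraph n) (gB n f) := by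
  constructor
  · intro u v w hu hv
    simp only [gB] at hu hv
    by_cases h1 : u = 0 <;> by_cases h2 : v = 0
    · exact h1.trans h2.symm
    · rw [dif_pos h1] at hu; rw [dif_neg h2] at hv
      obtain ⟨x, _, hxw⟩ := Option.map_eq_some_iff.mp hv
      exact absurd (hxw.trans (Option.some.inj hu).symm) x.2
    · rw [dif_pos h2] at hv; rw [dif_neg h1] at hu
      obtain ⟨x, _, hxw⟩ := Option.map_eq_some_iff.mp hu
      exact absurd (hxw.trans (Option.some.inj hv).symm) x.2
    · rw [dif_neg h1] at hu; rw [dif_neg h2] at hv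
      obtain ⟨x, hx, hxw⟩ := Option.map_eq_some_iff.mp hu
      obtain ⟨y, hy, hyw⟩ := Option.map_eq_some_iff.mp hv
      have hxy : x = y := Subtype.ext (hxw.trans hyw.symm)
      subst hxy
      exact congrArg Subtype.val (f.2 ⟨u, h1⟩ ⟨v, h2⟩ x hx hy)
  · intro u v u' v' hu hv hadj
    simp only [gB] at hu hv
    obtain ⟨hne, h0 | h0⟩ := (starAdj n u v).mp hadj
    · subst h0
      have hv0 : v ≠ 0 := fun h => hne h.symm
      rw [dif_pos rfl] at hu; rw [dif_neg hv0] at hv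
      obtain ⟨x, _, hxw⟩ := Option.map_eq_some_iff.mp hv
      have hu' : u' = 0 := (Option.some.inj hu).symm
      rw [starAdj, hu']
      exact ⟨fun h => x.2 (hxw.trans h.symm), Or.inl rfl⟩
    · subst h0
      rw [dif_pos rfl] at hv; rw [dif_neg hne] at hu
      obtain ⟨x, _, hxw⟩ := Option.map_eq_some_iff.mp hu
      have hv' : v' = 0 := (Option.some.inj hv).symm
      rw [starAdj, hv']
      exact ⟨fun h => x.2 (hxw.trans h), Or.inr rfl⟩

theorem gC_mem (c : SLeaf n) (o : Option (SLeaf n)) :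
    PInjective (gC n c o) ∧ IsPEnd (starGraph n) (gC n c o) := by
  constructor
  · intro u v w hu hv
    simp only [gC] at hu hv
    by_cases h1 : u = 0 <;> by_cases h2 : v = 0
    · exact h1.trans h2.symm
    · rw [if_pos h1] at hu; rw [if_neg h2] at hv
      split at hv
      · exact absurd ((Option.some.inj hu).trans (Option.some.inj hv).symm) c.2
      · exact absurd hv (by simp)
    · rw [if_pos h2] at hv; rw [if_neg h1] at hu
      split at hu
      · exact absurd ((Option.some.inj hv).trans (Option.some.inj hu).symm) c.2
      · exact absurd hu (by simp)
    · rw [if_neg h1] at hu; rw [if_neg h2] at hv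
      split at hu
      next h =>
        split at hv
        next h' => exact Option.some.inj (h.symm.trans h')
        next => exact absurd hv (by simp)
      next => exact absurd hu (by simp)
  · intro u v u' v' hu hv hadj
    simp only [gC] at hu hv
    obtain ⟨hne, h0 | h0⟩ := (starAdj n u v).mp hadj
    · subst h0
      have hv0 : v ≠ 0 := fun h => hne h.symm
      rw [if_pos rfl] at hu; rw [if_neg hv0] at hv
      have hu' : c.1 = u' := Option.some.inj hu
      have hv' : v' = 0 := by
        split at hv
        · exact (Option.some.inj hv).symm
        · exact absurd hv (by simp)
      rw [starAdj, ← hu', hv']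
      exact ⟨c.2, Or.inr rfl⟩
    · subst h0
      rw [if_pos rfl] at hv; rw [if_neg hne] at hu
      have hv' : c.1 = v' := Option.some.inj hv
      have hu' : u' = 0 := by
        split at hu
        · exact (Option.some.inj hu).symm
        · exact absurd hu (by simp)
      rw [starAdj, ← hv', hu']
      exact ⟨fun h => c.2 h.symm, Or.inl rfl⟩

end Star

section Star2
variable (n : ℕ) [NeZero n]

abbrev StarSum :=
  PInjFun (SLeaf n) (Fin n) ⊕ PInjFun (SLeaf n) (SLeaf n) ⊕ SLeaf n × Option (SLeaf n)

theorem gA_zero (f : PInjFun (SLeaf n) (Fin n)) : gA n f 0 = none := by simp [gA]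
theorem gB_zero (f : PInjFun (SLeaf n) (SLeaf n)) : gB n f 0 = some 0 := by simp [gB]
theorem gC_zero (c : SLeaf n) (o : Option (SLeaf n)) : gC n c o 0 = some c.1 := by simp [gC]

def gStar : StarSum n → {α : PTrans (Fin n) // PInjective α ∧ IsPEnd (starGraph n) α}
  | Sum.inl f => ⟨gA n f, gA_mem n f⟩
  | Sum.inr (Sum.inl f) => ⟨gB n f, gB_mem n f⟩
  | Sum.inr (Sum.inr (c, o)) => ⟨gC n c o, gC_mem n c o⟩

theorem gStar_injective : Function.Injective (gStar n) := by
  rintro (f | f | ⟨c, o⟩) (g | g | ⟨c', o'⟩) h <;>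
    have hval := congrArg Subtype.val h
  · have hfg : f = g := by
      apply Subtype.ext; funext i
      have hi := congrFun hval i.1
      simp only [gStar, gA] at hi
      rw [dif_neg i.2, dif_neg i.2] at hi
      exact hi
    rw [hfg]
  · have h0 := (gA_zero n f).symm.trans ((congrFun hval 0).trans (gB_zero n g))
    exact absurd h0 (by simp)
  · have h0 := (gA_zero n f).symm.trans ((congrFun hval 0).trans (gC_zero n c' o'))
    exact absurd h0 (by simp)
  · have h0 := (gB_zero n f).symm.trans ((congrFun hval 0).trans (gA_zero n g))
    exact absurd h0 (by simp)
  · have hfg : f = g := by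
      apply Subtype.ext; funext i
      have hi := congrFun hval i.1
      simp only [gStar, gB] at hi
      rw [dif_neg i.2, dif_neg i.2] at hi
      exact Option.map_injective Subtype.val_injective hi
    rw [hfg]
  · have h0 := (gB_zero n f).symm.trans ((congrFun hval 0).trans (gC_zero n c' o'))
    exact absurd (Option.some.inj h0).symm c'.2
  · have h0 := (gC_zero n c o).symm.trans ((congrFun hval 0).trans (gA_zero n g))
    exact absurd h0 (by simp)
  · have h0 := (gC_zero n c o).symm.trans ((congrFun hval 0).trans (gB_zero n g))
    exact absurd (Option.some.inj h0) c.2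
  · have h0 := (gC_zero n c o).symm.trans ((congrFun hval 0).trans (gC_zero n c' o'))
    have hc : c = c' := Subtype.ext (Option.some.inj h0)
    subst hc
    have ho : o = o' := by
      match o, o' with
      | none, none => rfl
      | none, some j =>
        have hj := congrFun hval j.1
        simp [gStar, gC, j.2] at hj
      | some i, none =>
        have hi := congrFun hval i.1
        simp [gStar, gC, i.2] at hi
      | some i, some j =>
        have hi := congrFun hval i.1
        simp only [gStar, gC] at hi
        rw [if_neg i.2, if_neg i.2, Option.map_some, Option.map_some, if_pos rfl] at hi
        split at hi
        next hh => exact congrArg some (Subtype.ext (Option.some.inj hh)).symm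
        next => exact absurd hi (by simp)
    rw [ho]

theorem gStar_surjective : Function.Surjective (gStar n) := by
  rintro ⟨α, hinj, hend⟩
  rcases h0 : α 0 with _ | c
  · refine ⟨Sum.inl ⟨fun i => α i.1, fun u v w hu hv => Subtype.ext (hinj u.1 v.1 w hu hv)⟩, ?_⟩
    apply Subtype.ext
    funext v
    show (if h : v = 0 then none else α v) = α v
    split
    next h => rw [h, h0]
    next => rfl
  · by_cases hc : c = 0
    · subst hc
      have key : ∀ i : Fin n, i ≠ 0 → α i ≠ some 0 := by
        intro i hi h
        exact hi (hinj i 0 0 h h0)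
      refine ⟨Sum.inr (Sum.inl ⟨fun i =>
        (α i.1).bind (fun w => if hw : w = 0 then none else some ⟨w, hw⟩), ?_⟩), ?_⟩
      · intro u v w hu hv
        obtain ⟨x, hx, hxw⟩ := Option.bind_eq_some_iff.mp hu
        obtain ⟨y, hy, hyw⟩ := Option.bind_eq_some_iff.mp hv
        split at hxw
        · exact absurd hxw (by simp)
        · split at hyw
          · exact absurd hyw (by simp)
          · have hx' : x = w.1 := congrArg Subtype.val (Option.some.inj hxw)
            have hy' : y = w.1 := congrArg Subtype.val (Option.some.inj hyw)
            exact Subtype.ext (hinj u.1 v.1 w.1 (hx' ▸ hx) (hy' ▸ hy))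
      · apply Subtype.ext
        funext v
        show (if h : v = 0 then some 0 else
          ((α v).bind (fun w => if hw : w = 0 then none else some ⟨w, hw⟩)).map Subtype.val)
          = α v
        split
        next h => rw [h, h0]
        next h =>
          rcases hav : α v with _ | x
          · simp
          · have hx0 : x ≠ 0 := fun hx => key v h (by rw [hav, hx])
            simp [hx0]
    · have key2 : ∀ v w, v ≠ 0 → α v = some w → w = 0 := by
        intro v w hv hw
        have hadj : (starGraph n).Adj 0 v := (starAdj n 0 v).mpr ⟨fun h => hv h.symm, Or.inl rfl⟩
        have hcw := (starAdj n c w).mp (hend 0 v c w h0 hw hadj)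
        rcases hcw.2 with h | h
        · exact absurd h hc
        · exact h
      by_cases hex : ∃ i : Fin n, i ≠ 0 ∧ (α i).isSome
      · obtain ⟨i, hi0, hisome⟩ := hex
        obtain ⟨w, hw⟩ := Option.isSome_iff_exists.mp hisome
        have hw0 : w = 0 := key2 i w hi0 hw
        subst hw0
        refine ⟨Sum.inr (Sum.inr (⟨c, hc⟩, some ⟨i, hi0⟩)), ?_⟩
        apply Subtype.ext
        funext v
        show (if v = 0 then some c else
          if (some (⟨i, hi0⟩ : SLeaf n)).map Subtype.val = some v then some 0 else none) = α v
        split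
        next h => rw [h, h0]
        next h =>
          rw [Option.map_some]
          by_cases hvi : v = i
          · subst hvi
            rw [if_pos rfl, hw]
          · rw [if_neg (fun hh => hvi (Option.some.inj hh).symm)]
            rcases hav : α v with _ | w'
            · rfl
            · have hw' : w' = 0 := key2 v w' h hav
              subst hw'
              exact absurd (hinj v i 0 hav hw) hvi
      · push_neg at hex
        refine ⟨Sum.inr (Sum.inr (⟨c, hc⟩, none)), ?_⟩
        apply Subtype.ext
        funext v
        show (if v = 0 then some c else
          if (none : Option (SLeaf n)).map Subtype.val = some v then some 0 else none) = α v
        split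
        next h => rw [h, h0]
        next h =>
          rw [if_neg (by simp)]
          have hvn : α v = none := Option.not_isSome_iff_eq_none.mp (hex v h)
          rw [hvn]

theorem card_SLeaf : Fintype.card (SLeaf n) = n - 1 := by
  have h := Fintype.card_subtype_compl (fun i : Fin n => i = 0)
  simpa [Fintype.card_subtype_eq] using h

end Star2

theorem stmt18 (n : ℕ) (hn : 3 ≤ n) :
    Nat.card {α : PTrans (Fin n) // PInjective α ∧ IsPEnd (starGraph n) α} =
      3 + 3 * n ^ 2 - 4 * n +
        ∑ k ∈ Finset.Icc 2 (n - 1),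
          (n.choose k + (n - 1).choose k) * (n - 1).choose k * k.factorial := by
  haveI : NeZero n := ⟨by omega⟩
  have hbij : Function.Bijective (gStar n) := ⟨gStar_injective n, gStar_surjective n⟩
  rw [Nat.card_congr (Equiv.ofBijective _ hbij).symm]
  rw [Nat.card_sum, Nat.card_sum, card_pinjFun, card_pinjFun, Nat.card_prod,
    Nat.card_eq_fintype_card, Nat.card_eq_fintype_card, Fintype.card_option,
    card_SLeaf, Fintype.card_fin]
  have hn1 : n - 1 + 1 = n := by omega
  rw [hn1]
  have hsplit : ∀ f : ℕ → ℕ,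
      ∑ k ∈ range n, f k = f 0 + f 1 + ∑ k ∈ Finset.Icc 2 (n - 1), f k := by
    intro f
    have hIcc : Finset.Ico 2 n = Finset.Icc 2 (n - 1) := by
      rw [← Finset.Ico_add_one_right_eq_Icc]
      congr 1
      omega
    rw [range_eq_Ico, ← Finset.sum_Ico_consecutive f (by omega : 0 ≤ 2) (by omega : 2 ≤ n),
      hIcc]
    congr 1
  rw [hsplit, hsplit]
  have hterm : ∑ k ∈ Finset.Icc 2 (n - 1), (n - 1).choose k * n.descFactorial k
      + ∑ k ∈ Finset.Icc 2 (n - 1), (n - 1).choose k * (n - 1).descFactorial k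
      = ∑ k ∈ Finset.Icc 2 (n - 1),
          (n.choose k + (n - 1).choose k) * (n - 1).choose k * k.factorial := by
    rw [← Finset.sum_add_distrib]
    refine Finset.sum_congr rfl fun k _ => ?_
    rw [Nat.descFactorial_eq_factorial_mul_choose, Nat.descFactorial_eq_factorial_mul_choose]
    ring
  have hbase : ((n - 1).choose 0 * n.descFactorial 0 + (n - 1).choose 1 * n.descFactorial 1)
      + ((n - 1).choose 0 * (n - 1).descFactorial 0 + (n - 1).choose 1 * (n - 1).descFactorial 1)
      + (n - 1) * n = 3 + 3 * n ^ 2 - 4 * n := by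
    simp only [Nat.choose_zero_right, Nat.choose_one_right, Nat.descFactorial_zero,
      Nat.descFactorial_one, one_mul]
    obtain ⟨m, rfl⟩ : ∃ m, n = m + 3 := ⟨n - 3, by omega⟩
    have e : m + 3 - 1 = m + 2 := by omega
    rw [e]
    refine eq_tsub_of_add_eq ?_
    ring
  rw [← hterm, ← hbase]
  ring
end
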